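/- Let L/K be an extension of fields, n ≥ 2 even, G a group, ρ: G → GSp_n(L) a homomorphism, χ: G → K^× any character, and ψ: G → L^× a character of finite order such that the multiplier satisfies m∘ρ = ψ·χ. Let γ ∈ Aut(L/K) and let ε: G → L^× be a character such that γ∘ρ is symplectically equivalent to ρ ⊗ ε. Then ε(g)² = γ(ψ(g))·ψ(g)⁻¹ for all g ∈ G, and all values of ε lie in the subfield of L generated over K by the values of ψ. -/

import Mathlib

open Matrix

noncomputable section

/-- The Gram matrix of the standard symplectic form on `R^n` (for `n` even):
block form `[[0, I], [-I, 0]]`. -/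
def stdJ (n : ℕ) (R : Type*) [CommRing R] : Matrix (Fin n) (Fin n) R :=
  Matrix.of fun i j =>
    if i.val + n / 2 = j.val then 1 else if j.val + n / 2 = i.val then -1 else 0

/-- Membership in the general symplectic group `GSp_n(R)`. -/
def IsGSp (n : ℕ) (R : Type*) [CommRing R] (M : Matrix (Fin n) (Fin n) R) : Prop :=
  IsUnit M ∧ ∃ α : Rˣ, Mᵀ * stdJ n R * M = (α : R) • stdJ n R

/-- For a symplectic representation `ρ` with multiplier `m∘ρ = ψ·χ` (`χ` valued in
`K^×`, `ψ` of finite order), `γ ∈ Aut(L/K)` and a character `ε` such that `γ∘ρ` is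
symplectically equivalent to `ρ ⊗ ε`, one has `ε(g)² = γ(ψ(g))·ψ(g)⁻¹`, and the values
of `ε` lie in the subfield of `L` generated over `K` by the values of `ψ`. -/
theorem epsilon_sq_eq_gamma_psi_div_psi
    {K L : Type*} [Field K] [Field L] [Algebra K L]
    {G : Type*} [Group G] {n : ℕ} (hn2 : 2 ≤ n) (hneven : Even n)
    (ρ : G →* Matrix (Fin n) (Fin n) L)
    (hρGSp : ∀ g, IsGSp n L (ρ g))
    (χ : G →* Kˣ) (ψ : G →* Lˣ) (hψ : IsOfFinOrder ψ)
    (hmult : ∀ g, (ρ g)ᵀ * stdJ n L * ρ g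
      = ((ψ g : L) * algebraMap K L (χ g)) • stdJ n L)
    (γ : L ≃ₐ[K] L) (ε : G →* Lˣ)
    (hequiv : ∃ M : Matrix (Fin n) (Fin n) L, IsGSp n L M ∧
      ∀ g, (ρ g).map ⇑γ = M * ((ε g : L) • ρ g) * M⁻¹) :
    ∀ g, (ε g : L) ^ 2 = γ (ψ g : L) * (ψ g : L)⁻¹ ∧
      (ε g : L) ∈
        IntermediateField.adjoin K (Set.range fun h : G => (ψ h : L)) := by
  obtain ⟨M, ⟨hMu, α, hMJ⟩, hMρ⟩ := hequiv
  set J : Matrix (Fin n) (Fin n) L := stdJ n L with hJdef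
  have hα0 : (α : L) ≠ 0 := Units.ne_zero α
  have hMdet : IsUnit M.det := (Matrix.isUnit_iff_isUnit_det M).mp hMu
  have hMM' : M * M⁻¹ = 1 := Matrix.mul_nonsing_inv M hMdet
  -- the inverse relation for M⁻¹
  have hNJ : M⁻¹ᵀ * J * M⁻¹ = ((α : L))⁻¹ • J := by
    have h0 : M⁻¹ᵀ * (Mᵀ * J * M) * M⁻¹ = J := by
      calc M⁻¹ᵀ * (Mᵀ * J * M) * M⁻¹
          = (M * M⁻¹)ᵀ * J * (M * M⁻¹) := by
            rw [Matrix.transpose_mul]; simp only [Matrix.mul_assoc]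
        _ = J := by rw [hMM']; simp
    rw [hMJ, Matrix.mul_smul, Matrix.smul_mul] at h0
    calc M⁻¹ᵀ * J * M⁻¹
        = ((α : L))⁻¹ • ((α : L) • (M⁻¹ᵀ * J * M⁻¹)) := by
          rw [smul_smul, inv_mul_cancel₀ hα0, one_smul]
      _ = ((α : L))⁻¹ • J := by rw [h0]
  -- conjugation by M preserves the multiplier
  have key : ∀ (A : Matrix (Fin n) (Fin n) L) (c : L), Aᵀ * J * A = c • J →
      (M * A * M⁻¹)ᵀ * J * (M * A * M⁻¹) = c • J := by
    intro A c hA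
    have e1 : (M * A * M⁻¹)ᵀ = M⁻¹ᵀ * (Aᵀ * Mᵀ) := by
      rw [Matrix.transpose_mul, Matrix.transpose_mul]
    calc (M * A * M⁻¹)ᵀ * J * (M * A * M⁻¹)
        = M⁻¹ᵀ * (Aᵀ * (Mᵀ * J * M) * A) * M⁻¹ := by
          rw [e1]; simp only [Matrix.mul_assoc]
      _ = M⁻¹ᵀ * (Aᵀ * ((α : L) • J) * A) * M⁻¹ := by rw [hMJ]
      _ = (α : L) • (M⁻¹ᵀ * (Aᵀ * J * A) * M⁻¹) := by
          simp only [Matrix.mul_smul, Matrix.smul_mul]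
      _ = (α : L) • (c • (M⁻¹ᵀ * J * M⁻¹)) := by
          rw [hA]; simp only [Matrix.mul_smul, Matrix.smul_mul]
      _ = (α : L) • c • ((α : L))⁻¹ • J := by rw [hNJ]
      _ = c • J := by
          rw [smul_smul, smul_smul]
          congr 1
          field_simp
  intro g
  -- the matrices are over a field, γ acts entrywise as a ring hom
  have hmapmul : ∀ A B : Matrix (Fin n) (Fin n) L,
      (A * B).map ⇑γ = A.map ⇑γ * B.map ⇑γ := by
    intro A B
    ext i j
    simp [Matrix.mul_apply, Matrix.map_apply, map_sum]
  have hJγ : J.map ⇑γ = J := by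
    ext i j
    simp only [Matrix.map_apply, hJdef, stdJ, Matrix.of_apply]
    split_ifs <;> simp
  -- multiplier of γ ∘ ρ, computed directly
  have h1 : ((ρ g).map ⇑γ)ᵀ * J * ((ρ g).map ⇑γ)
      = (γ ((ψ g : L) * algebraMap K L (χ g))) • J := by
    have e2 : ((ρ g).map ⇑γ)ᵀ = (ρ g)ᵀ.map ⇑γ := (Matrix.transpose_map).symm
    rw [e2, ← hJγ, ← hmapmul, ← hmapmul, hmult g]
    ext i j
    simp [Matrix.map_apply, Matrix.smul_apply, smul_eq_mul]
  -- multiplier of ρ ⊗ ε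
  have hB : ((ε g : L) • ρ g)ᵀ * J * ((ε g : L) • ρ g)
      = ((ε g : L) ^ 2 * ((ψ g : L) * algebraMap K L (χ g))) • J := by
    rw [Matrix.transpose_smul, Matrix.smul_mul, Matrix.smul_mul, Matrix.mul_smul,
      hmult g, smul_smul, smul_smul]
    congr 1
    ring
  have h2 := key _ _ hB
  rw [hMρ g] at h1
  have h3 : (γ ((ψ g : L) * algebraMap K L (χ g))) • J
      = ((ε g : L) ^ 2 * ((ψ g : L) * algebraMap K L (χ g))) • J := by
    rw [← h1, h2]
  -- evaluate at the entry (0, n/2), where J = 1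
  have hn2' : n / 2 < n := by omega
  have h4 := congrArg (fun N : Matrix (Fin n) (Fin n) L => N ⟨0, by omega⟩ ⟨n / 2, hn2'⟩) h3
  have hJ10 : J ⟨0, by omega⟩ ⟨n / 2, hn2'⟩ = 1 := by
    simp [hJdef, stdJ]
  simp only [Matrix.smul_apply, hJ10, smul_eq_mul, mul_one] at h4
  have hχ0 : algebraMap K L ((χ g : K)) ≠ 0 := by
    simp [Units.ne_zero]
  have hψ0 : ((ψ g : L)) ≠ 0 := Units.ne_zero _
  have h5 : γ ((ψ g : L)) = (ε g : L) ^ 2 * (ψ g : L) := by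
    apply mul_right_cancel₀ hχ0
    rw [_root_.map_mul, γ.commutes] at h4
    rw [h4]
    ring
  have part1 : (ε g : L) ^ 2 = γ (ψ g : L) * (ψ g : L)⁻¹ := by
    rw [h5, mul_assoc, mul_inv_cancel₀ hψ0, mul_one]
  refine ⟨part1, ?_⟩
  -- part 2 : epsilon takes values in K(ψ)
  obtain ⟨k, hk0, hk1⟩ := isOfFinOrder_iff_pow_eq_one.mp hψ
  have hψg : IsOfFinOrder (ψ g) := isOfFinOrder_iff_pow_eq_one.mpr
    ⟨k, hk0, by rw [← MonoidHom.pow_apply, hk1, MonoidHom.one_apply]⟩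
  set z : L := ((ψ g : L)) with hzdef
  set m : ℕ := orderOf (ψ g) with hmdef
  have hm : 0 < m := hψg.orderOf_pos
  haveI : NeZero m := ⟨hm.ne'⟩
  have hprim : IsPrimitiveRoot z m :=
    IsPrimitiveRoot.coe_units_iff.mpr (IsPrimitiveRoot.orderOf (ψ g))
  have hγprim : IsPrimitiveRoot (γ z) m := hprim.map_of_injective γ.injective
  have hzm : z ^ m = 1 := hprim.pow_eq_one
  obtain ⟨i, him, hi⟩ := hprim.eq_pow_of_pow_eq_one
    (by rw [← _root_.map_pow, hzm, _root_.map_one] : (γ z) ^ m = 1)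
  have hcop : Nat.Coprime i m := (hprim.pow_iff_coprime hm i).mp (hi ▸ hγprim)
  have hγz : γ z * z⁻¹ = z ^ (i + m - 1) := by
    have e3 : z ^ (i + m - 1) * z = z ^ (i + m) := by
      rw [← pow_succ]
      congr 1
      omega
    have e4 : z ^ (i + m) = γ z := by rw [pow_add, hzm, mul_one, hi]
    field_simp
    rw [mul_comm, e3, e4]
  obtain ⟨b, hb⟩ : ∃ b, z ^ (2 * b) = z ^ (i + m - 1) := by
    rcases Nat.even_or_odd m with hm2 | hm2
    · -- m even, so i is odd and i + m - 1 is even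
      have hio : ¬ 2 ∣ i := by
        intro h2i
        have : (2 : ℕ) ∣ Nat.gcd i m := Nat.dvd_gcd h2i hm2.two_dvd
        rw [Nat.Coprime] at hcop
        omega
      refine ⟨(i + m - 1) / 2, ?_⟩
      congr 1
      rw [Nat.even_iff] at hm2
      omega
    · rcases Nat.even_or_odd (i + m - 1) with hj | hj
      · refine ⟨(i + m - 1) / 2, ?_⟩
        congr 1
        rw [Nat.even_iff] at hj
        omega
      · refine ⟨(i + m - 1 + m) / 2, ?_⟩
        have e5 : 2 * ((i + m - 1 + m) / 2) = i + m - 1 + m := by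
          rw [Nat.odd_iff] at hm2 hj
          omega
        rw [e5, pow_add, hzm, mul_one]
  have hsq : (ε g : L) ^ 2 = (z ^ b) ^ 2 := by
    rw [part1, hγz, ← hb, ← pow_mul, mul_comm b 2]
  have hzF : z ∈ IntermediateField.adjoin K (Set.range fun h : G => ((ψ h : L))) :=
    IntermediateField.subset_adjoin K _ ⟨g, rfl⟩
  rcases sq_eq_sq_iff_eq_or_eq_neg.mp hsq with h | h
  · rw [h]; exact pow_mem hzF b
  · rw [h]; exact neg_mem (pow_mem hzF b)
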